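/- arXiv:2505.14641 — 2 statements merged into one kernel-verified Lean document; each statement's English description precedes it below -/
import Mathlib

section
/- For every natural number q ≥ 2 there exists a subset U of the vertices of the Hamming graph H(2,q) with |U| = 2q − i, where i = 0 if q is even and i = 1 if q is odd, such that the VC-dimension of (U, n(U)) is exactly 1. -/
/-- Two vertices of the Hamming graph `H(d,q,t)` (vertex set `(ZMod q)^d`) are adjacent
if and only if they differ in exactly `t` coordinates. -/
def hammingAdj {d q : ℕ} (t : ℕ) (x y : Fin d → ZMod q) : Prop :=
  (Finset.univ.filter fun i => x i ≠ y i).card = t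

/-- `W ⊆ U` is shattered by the neighborhoods `n(U)`: for every `S ⊆ W` there is a
vertex `u ∈ U` with `n(u) ∩ W = S`. -/
def Shatters {d q : ℕ} (t : ℕ) (U W : Finset (Fin d → ZMod q)) : Prop :=
  ∀ S ⊆ W, ∃ u ∈ U, ∀ w ∈ W, (w ∈ S ↔ hammingAdj t u w)

open Finset

def Uset (q : ℕ) [NeZero q] : Finset (Fin 2 → ZMod q) :=
  Finset.univ.filter fun v => (v 0).val / 2 = (v 1).val / 2

lemma mem_Uset {q : ℕ} [NeZero q] {v : Fin 2 → ZMod q} :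
    v ∈ Uset q ↔ (v 0).val / 2 = (v 1).val / 2 := by
  simp [Uset]

lemma card_Uset (q : ℕ) [NeZero q] (hq : 2 ≤ q) :
    (Uset q).card = 2 * q - (if Even q then 0 else 1) := by
  have hval : ∀ x y : ZMod q, x = y ↔ x.val = y.val :=
    fun x y => ⟨congrArg _, fun h => ZMod.val_injective q h⟩
  have hfibcard : ∀ x : ZMod q,
      ((Uset q).filter fun v => v 0 = x).card
        = ((Finset.univ.filter fun y : ZMod q => x.val / 2 = y.val / 2)).card := by
    intro x
    apply Finset.card_nbij' (fun v => v 1) (fun y => fun i : Fin 2 => if i = 0 then x else y)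
    · intro v hv
      simp only [Finset.mem_coe, Finset.mem_filter, mem_Uset, Finset.mem_univ, true_and] at hv ⊢
      rw [← hv.2]; exact hv.1
    · intro y hy
      simp only [Finset.mem_coe, Finset.mem_filter, mem_Uset, Finset.mem_univ, true_and] at hy ⊢
      constructor
      · simpa using hy
      · rfl
    · intro v hv
      simp only [Finset.mem_coe, Finset.mem_filter, mem_Uset] at hv
      funext i
      fin_cases i
      · simpa using hv.2.symm
      · simp
    · intro y hy; simp
  have hfib2 : ∀ x : ZMod q,
      ((Finset.univ.filter fun y : ZMod q => x.val / 2 = y.val / 2)).card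
        = if 2 * (x.val / 2) + 1 < q then 2 else 1 := by
    intro x
    have hxlt : x.val < q := ZMod.val_lt x
    by_cases h : 2 * (x.val / 2) + 1 < q
    · rw [if_pos h]
      have hset : (Finset.univ.filter fun y : ZMod q => x.val / 2 = y.val / 2)
          = {((2 * (x.val / 2) : ℕ) : ZMod q), ((2 * (x.val / 2) + 1 : ℕ) : ZMod q)} := by
        ext y
        have hylt : y.val < q := ZMod.val_lt y
        have hv1 : ((2 * (x.val / 2) : ℕ) : ZMod q).val = 2 * (x.val / 2) :=
          ZMod.val_cast_of_lt (by omega)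
        have hv2 : ((2 * (x.val / 2) + 1 : ℕ) : ZMod q).val = 2 * (x.val / 2) + 1 :=
          ZMod.val_cast_of_lt h
        simp only [Finset.mem_filter, Finset.mem_univ, true_and, Finset.mem_insert,
          Finset.mem_singleton, hval, hv1, hv2]
        omega
      rw [hset, Finset.card_insert_of_notMem, Finset.card_singleton]
      rw [Finset.mem_singleton, hval, ZMod.val_cast_of_lt (by omega), ZMod.val_cast_of_lt h]
      omega
    · rw [if_neg h]
      have hset : (Finset.univ.filter fun y : ZMod q => x.val / 2 = y.val / 2) = {x} := by
        ext y
        have hylt : y.val < q := ZMod.val_lt y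
        simp only [Finset.mem_filter, Finset.mem_univ, true_and, Finset.mem_singleton, hval]
        omega
      rw [hset, Finset.card_singleton]
  have hfib : (Uset q).card = ∑ x : ZMod q, ((Uset q).filter fun v => v 0 = x).card :=
    Finset.card_eq_sum_card_fiberwise (fun v _ => Finset.mem_univ _)
  rw [hfib]; clear hfib
  simp_rw [hfibcard, hfib2]
  have key : ∀ x : ZMod q, (if 2 * (x.val / 2) + 1 < q then (2:ℕ) else 1)
      = 1 + (if 2 * (x.val / 2) + 1 < q then 1 else 0) := by
    intro x; split <;> rfl
  simp_rw [key]
  rw [Finset.sum_add_distrib, Finset.sum_const, Finset.card_univ, ZMod.card, smul_eq_mul,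
    mul_one]
  have hb := Finset.sum_boole (R := ℕ) (fun x : ZMod q => 2 * (x.val / 2) + 1 < q) Finset.univ
  rw [Nat.cast_id] at hb
  rw [hb]; clear hb
  by_cases hev : Even q
  · rw [if_pos hev]
    have huniv : (Finset.univ.filter fun x : ZMod q => 2 * (x.val / 2) + 1 < q) = Finset.univ := by
      apply Finset.filter_true_of_mem
      intro x _
      have := ZMod.val_lt x
      rw [Nat.even_iff] at hev
      omega
    rw [huniv, Finset.card_univ, ZMod.card]
    omega
  · rw [if_neg hev]
    rw [Nat.not_even_iff] at hev
    have hneg : (Finset.univ.filter fun x : ZMod q => ¬ (2 * (x.val / 2) + 1 < q))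
        = {(((q - 1 : ℕ)) : ZMod q)} := by
      ext y
      have hylt : y.val < q := ZMod.val_lt y
      have hv : (((q - 1 : ℕ)) : ZMod q).val = q - 1 := ZMod.val_cast_of_lt (by omega)
      simp only [Finset.mem_filter, Finset.mem_univ, true_and, Finset.mem_singleton, hval, hv]
      omega
    have hsum := Finset.card_filter_add_card_filter_not
      (s := (Finset.univ : Finset (ZMod q)))
      (fun x : ZMod q => 2 * (x.val / 2) + 1 < q)
    rw [hneg, Finset.card_singleton, Finset.card_univ, ZMod.card] at hsum
    omega

lemma adj_iff {q : ℕ} (u w : Fin 2 → ZMod q) :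
    hammingAdj 1 u w ↔ (u 0 = w 0 ∧ u 1 ≠ w 1) ∨ (u 0 ≠ w 0 ∧ u 1 = w 1) := by
  have huniv : (Finset.univ : Finset (Fin 2)) = {0, 1} := by decide
  unfold hammingAdj
  rw [huniv]
  by_cases h0 : u 0 = w 0 <;> by_cases h1 : u 1 = w 1 <;>
    simp [Finset.filter_insert, Finset.filter_singleton, h0, h1]

/-- for every `q ≥ 2` there is `U ⊆ V(H(2,q))` with `|U| = 2q - i`,
where `i = 0` if `q` is even and `i = 1` if `q` is odd, whose VC-dimension is exactly 1. -/
theorem exists_vc_dim_one_H2q (q : ℕ) (hq : 2 ≤ q) :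
    ∃ U : Finset (Fin 2 → ZMod q),
      U.card = 2 * q - (if Even q then 0 else 1) ∧
      (∃ W ⊆ U, W.card = 1 ∧ Shatters 1 U W) ∧
      (∀ W ⊆ U, Shatters 1 U W → W.card ≤ 1) := by
  haveI : NeZero q := ⟨by omega⟩
  haveI : Fact (1 < q) := ⟨hq⟩
  have hval : ∀ x y : ZMod q, x = y ↔ x.val = y.val :=
    fun x y => ⟨congrArg _, fun h => ZMod.val_injective q h⟩
  -- Part A : singleton shattered
  have partA : ∃ W ⊆ Uset q, W.card = 1 ∧ Shatters 1 (Uset q) W := by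
    refine ⟨{fun _ => 0}, ?_, Finset.card_singleton _, ?_⟩
    · intro w hw
      rw [Finset.mem_singleton] at hw
      subst hw
      rw [mem_Uset]
    · intro S hS
      rcases Finset.subset_singleton_iff.1 hS with rfl | rfl
      · refine ⟨fun _ => 0, by rw [mem_Uset], ?_⟩
        intro w hw
        rw [Finset.mem_singleton] at hw
        subst hw
        simp only [Finset.notMem_empty, false_iff]
        rw [adj_iff]
        simp
      · refine ⟨fun i => if i = 0 then 0 else 1, ?_, ?_⟩
        · rw [mem_Uset]
          simp [ZMod.val_one q, ZMod.val_zero]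
        · intro w hw
          rw [Finset.mem_singleton] at hw
          subst hw
          simp only [Finset.mem_singleton, true_iff]
          rw [adj_iff]
          left
          refine ⟨by simp, ?_⟩
          simp only [if_neg (by decide : ¬ (1 : Fin 2) = 0)]
          intro hcon
          rw [hval, ZMod.val_one q, ZMod.val_zero] at hcon
          omega
  -- Part B : no 2-set shattered
  have partB : ∀ W ⊆ Uset q, Shatters 1 (Uset q) W → W.card ≤ 1 := by
    intro W hW hSh
    by_contra hcard
    push_neg at hcard
    obtain ⟨a, ha, b, hb, hab⟩ := Finset.one_lt_card.1 hcard
    obtain ⟨u, hu, hiff⟩ := hSh {a, b} (Finset.insert_subset ha (Finset.singleton_subset_iff.2 hb))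
    obtain ⟨u', hu', hiff'⟩ := hSh {a} (Finset.singleton_subset_iff.2 ha)
    have hua : hammingAdj 1 u a := (hiff a ha).1 (Finset.mem_insert_self a {b})
    have hub : hammingAdj 1 u b := (hiff b hb).1 (by simp)
    have hva : hammingAdj 1 u' a := (hiff' a ha).1 (Finset.mem_singleton_self a)
    have hvb : ¬ hammingAdj 1 u' b := fun h =>
      hab (Finset.mem_singleton.1 ((hiff' b hb).2 h)).symm
    rw [adj_iff] at hua hub hva
    rw [adj_iff] at hvb
    have hma := mem_Uset.1 (hW ha)
    have hmb := mem_Uset.1 (hW hb)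
    have hmu := mem_Uset.1 hu
    have hmv := mem_Uset.1 hu'
    have hne : a 0 ≠ b 0 ∨ a 1 ≠ b 1 := by
      by_contra hc
      push_neg at hc
      exact hab (funext fun i => by fin_cases i <;> simp [hc.1, hc.2])
    simp only [ne_eq, hval] at hua hub hva hvb hne
    omega
  exact ⟨Uset q, card_Uset q hq, partA, partB⟩
end

section
/- Let q ≥ 3 be a natural number and let U be a subset of the vertices of the Hamming graph H(2,q). If U contains three distinct vertices lying on a common rectilinear line L, as well as a fourth vertex not on L, then the VC-dimension of (U, n(U)) is at least 2. -/
lemma fin2_cases {i j : Fin 2} (hij : i ≠ j) (k : Fin 2) : k = i ∨ k = j := by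
  revert hij; revert i j k; decide

lemma adj_of_line {q : ℕ} {i j : Fin 2} (hij : i ≠ j) {u v : Fin 2 → ZMod q}
    (h1 : u i = v i) (h2 : u j ≠ v j) : hammingAdj 1 u v := by
  unfold hammingAdj
  have : (Finset.univ.filter fun k => u k ≠ v k) = {j} := by
    ext k
    simp only [Finset.mem_filter, Finset.mem_univ, true_and, Finset.mem_singleton]
    rcases fin2_cases hij k with rfl | rfl
    · simp only [h1, ne_eq, not_true_eq_false, false_iff]; exact hij
    · simp [h2]
  rw [this]; simp

lemma not_adj_self {q : ℕ} (u : Fin 2 → ZMod q) : ¬ hammingAdj 1 u u := by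
  unfold hammingAdj
  have : (Finset.univ.filter fun k => u k ≠ u k) = ∅ := by simp
  rw [this]; simp

lemma not_adj_of_two {q : ℕ} {i j : Fin 2} (hij : i ≠ j) {u v : Fin 2 → ZMod q}
    (h1 : u i ≠ v i) (h2 : u j ≠ v j) : ¬ hammingAdj 1 u v := by
  unfold hammingAdj
  have : (Finset.univ.filter fun k => u k ≠ v k) = Finset.univ := by
    ext k
    simp only [Finset.mem_filter, Finset.mem_univ, true_and, iff_true]
    rcases fin2_cases hij k with rfl | rfl
    · exact h1
    · exact h2
  rw [this]; simp

lemma eq_of_coords {q : ℕ} {i j : Fin 2} (hij : i ≠ j) {u v : Fin 2 → ZMod q}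
    (h1 : u i = v i) (h2 : u j = v j) : u = v := by
  funext k
  rcases fin2_cases hij k with rfl | rfl <;> assumption

lemma key {q : ℕ} (U : Finset (Fin 2 → ZMod q)) {i j : Fin 2} (hij : i ≠ j)
    {a b c w : Fin 2 → ZMod q}
    (ha : a ∈ U) (hb : b ∈ U) (hc : c ∈ U) (hw : w ∈ U)
    (hab : a ≠ b) (hca : c ≠ a) (hcb : c ≠ b)
    (lab : a i = b i) (lac : a i = c i)
    (hwi : w i ≠ a i) (hwa : w j ≠ a j) (hwb : w j ≠ b j) :
    ∃ W ⊆ U, W.card = 2 ∧ Shatters 1 U W := by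
  have habj : a j ≠ b j := fun h => hab (eq_of_coords hij lab h)
  have hcaj : c j ≠ a j := fun h => hca (eq_of_coords hij lac.symm h)
  have hcbj : c j ≠ b j := fun h => hcb (eq_of_coords hij (lab ▸ lac.symm) h)
  refine ⟨{a, b}, ?_, ?_, ?_⟩
  · intro v hv
    rcases Finset.mem_insert.mp hv with rfl | hv
    · exact ha
    · rw [Finset.mem_singleton.mp hv]; exact hb
  · rw [Finset.card_insert_of_notMem (by simpa using hab), Finset.card_singleton]
  · intro S hS
    by_cases haS : a ∈ S <;> by_cases hbS : b ∈ S
    · refine ⟨c, hc, ?_⟩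
      intro v hv
      rcases Finset.mem_insert.mp hv with h | h
      · rw [h]
        simp only [haS, true_iff]; exact adj_of_line hij lac.symm hcaj
      · rw [Finset.mem_singleton.mp h]
        simp only [hbS, true_iff]
        exact adj_of_line hij (lac.symm.trans lab) hcbj
    · refine ⟨b, hb, ?_⟩
      intro v hv
      rcases Finset.mem_insert.mp hv with h | h
      · rw [h]
        simp only [haS, true_iff]; exact adj_of_line hij lab.symm (Ne.symm habj)
      · rw [Finset.mem_singleton.mp h]
        simp only [hbS, false_iff]; exact not_adj_self b
    · refine ⟨a, ha, ?_⟩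
      intro v hv
      rcases Finset.mem_insert.mp hv with h | h
      · rw [h]
        simp only [haS, false_iff]; exact not_adj_self a
      · rw [Finset.mem_singleton.mp h]
        simp only [hbS, true_iff]; exact adj_of_line hij lab habj
    · refine ⟨w, hw, ?_⟩
      intro v hv
      rcases Finset.mem_insert.mp hv with h | h
      · rw [h]
        simp only [haS, false_iff]; exact not_adj_of_two hij hwi hwa
      · rw [Finset.mem_singleton.mp h]
        simp only [hbS, false_iff]
        exact not_adj_of_two hij (lab ▸ hwi) hwb

/-- if `q ≥ 3` and `U ⊆ V(H(2,q))` contains three distinct vertices on a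
common rectilinear line (agreeing in coordinate `i`) together with a fourth vertex off
that line, then the VC-dimension of `(U, n(U))` is at least 2. -/
theorem vc_dim_ge_two_of_three_on_line (q : ℕ) (hq : 3 ≤ q)
    (U : Finset (Fin 2 → ZMod q)) (i : Fin 2)
    (x y z w : Fin 2 → ZMod q)
    (hx : x ∈ U) (hy : y ∈ U) (hz : z ∈ U) (hw : w ∈ U)
    (hxy : x ≠ y) (hxz : x ≠ z) (hyz : y ≠ z)
    (hline₁ : x i = y i) (hline₂ : x i = z i)
    (hoff : w i ≠ x i) :
    ∃ W ⊆ U, W.card = 2 ∧ Shatters 1 U W := by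
  set j : Fin 2 := if i = 0 then 1 else 0 with hj
  have hij : i ≠ j := by
    rcases fin2_cases (i := (0 : Fin 2)) (j := 1) (by decide) i with rfl | rfl <;> simp [hj]
  have hxyj : x j ≠ y j := fun h => hxy (eq_of_coords hij hline₁ h)
  have hxzj : x j ≠ z j := fun h => hxz (eq_of_coords hij hline₂ h)
  have hyzj : y j ≠ z j := fun h => hyz (eq_of_coords hij (hline₁ ▸ hline₂) h)
  by_cases hwx : w j = x j
  · -- use a = y, b = z, c = x
    exact key U hij hy hz hx hw hyz hxy hxz (hline₁ ▸ hline₂) hline₁.symm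
      (hline₁ ▸ hoff) (hwx ▸ hxyj) (hwx ▸ hxzj)
  · by_cases hwy : w j = y j
    · -- a = x, b = z, c = y
      exact key U hij hx hz hy hw hxz hxy.symm hyz hline₂ hline₁ hoff
        (hwy ▸ Ne.symm hxyj) (hwy ▸ hyzj)
    · -- a = x, b = y, c = z
      exact key U hij hx hy hz hw hxy hxz.symm hyz.symm hline₁ hline₂ hoff hwx hwy
end
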